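/- On Diamond(5) under 8-move solitaire, the Merson-region heuristic h₃(B) = (number of completely filled Merson regions of B) is an admissible lower bound on the number of moves needed to reach any single-peg position from B: each filled region requires at least one move originating inside it, and distinct filled regions require distinct such moves. -/

import Mathlib

open Finset

abbrev Cell := ℤ × ℤ
abbrev Pos := Finset Cell

/-- The four orthogonal jump directions (4-move solitaire). -/
def dirs4 : Finset Cell := {(1,0),(-1,0),(0,1),(0,-1)}

/-- The eight jump directions (8-move solitaire). -/
def dirs8 : Finset Cell :=
  {(1,0),(-1,0),(0,1),(0,-1),(1,1),(1,-1),(-1,1),(-1,-1)}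

/-- A legal jump on `board` with allowed directions `dirs`, taking position `B` to `B'`:
the peg at `p` jumps over the peg at `p + d` into the empty hole `p + d + d`,
removing the jumped peg. -/
def IsJump (board dirs : Finset Cell) (B B' : Pos) (p d : Cell) : Prop :=
  d ∈ dirs ∧ p ∈ B ∧ p + d ∈ B ∧ p + d + d ∈ board ∧ p + d + d ∉ B ∧
    B' = insert (p + d + d) ((B.erase p).erase (p + d))

/-- A move: one or more consecutive jumps by the same peg, starting at `p` and ending at `q`. -/
inductive Move (board dirs : Finset Cell) : Pos → Pos → Cell → Cell → Prop
  | single {B B' : Pos} {p d : Cell} (h : IsJump board dirs B B' p d) :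
      Move board dirs B B' p (p + d + d)
  | cons {B B' B'' : Pos} {p d q : Cell} (h : IsJump board dirs B B' p d)
      (hm : Move board dirs B' B'' (p + d + d) q) : Move board dirs B B'' p q

/-- A sequence of moves, recorded as a list of (start hole, end hole) pairs. -/
inductive MoveSeq (board dirs : Finset Cell) : Pos → Pos → List (Cell × Cell) → Prop
  | nil (B : Pos) : MoveSeq board dirs B B []
  | cons {B B' B'' : Pos} {p q : Cell} {l : List (Cell × Cell)}
      (h : Move board dirs B B' p q) (hs : MoveSeq board dirs B' B'' l) :
      MoveSeq board dirs B B'' ((p, q) :: l)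

/-- The diamond board of "radius" r : all integer points with |x|+|y| ≤ r. -/
noncomputable def diamondB (r : ℤ) : Finset Cell :=
  ((Finset.Icc (-r) r) ×ˢ (Finset.Icc (-r) r)).filter (fun p => |p.1| + |p.2| ≤ r)

/-- The standard 33-hole cross-shaped board. -/
noncomputable def board33 : Finset Cell :=
  ((Finset.Icc (-3 : ℤ) 3) ×ˢ (Finset.Icc (-3 : ℤ) 3)).filter
    (fun p => |p.1| ≤ 1 ∨ |p.2| ≤ 1)

/-- The 37-hole board (7×7 square minus three holes at each corner). -/
noncomputable def board37 : Finset Cell :=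
  ((Finset.Icc (-3 : ℤ) 3) ×ˢ (Finset.Icc (-3 : ℤ) 3)).filter
    (fun p => |p.1| ≤ 1 ∨ |p.2| ≤ 1 ∨ (|p.1| ≤ 2 ∧ |p.2| ≤ 2))

/-- The central 3×3 block of nine holes. -/
noncomputable def C9 : Finset Cell := (Finset.Icc (-1 : ℤ) 1) ×ˢ (Finset.Icc (-1 : ℤ) 1)

/-- `S` is a Merson region: if `S` is entirely occupied, no jump starting outside `S`
can remove a peg of `S`. -/
def MersonRegion (board dirs : Finset Cell) (S : Finset Cell) : Prop :=
  ∀ (B B' : Pos) (p d : Cell), S ⊆ B → IsJump board dirs B B' p d → p ∉ S → S ⊆ B'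

/-- The 41-hole Diamond(5) board. -/
noncomputable def diamond5 : Finset Cell := diamondB 4

/-- If a move starts outside a Merson region that is fully occupied, the region stays
fully occupied and the moving peg ends outside the region. -/
lemma move_preserve {board dirs : Finset Cell} {B B' : Pos} {p q : Cell}
    (h : Move board dirs B B' p q) {S : Finset Cell}
    (hMer : MersonRegion board dirs S) (hS : S ⊆ B) (hp : p ∉ S) :
    S ⊆ B' ∧ q ∉ S := by
  induction h with
  | @single B B' p d hj =>
    refine ⟨hMer B B' p d hS hj hp, fun hq => hj.2.2.2.2.1 (hS hq)⟩
  | @cons B B' B'' p d q hj hm ih =>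
    have h1 : S ⊆ B' := hMer B B' p d hS hj hp
    have h2 : p + d + d ∉ S := fun hq => hj.2.2.2.2.1 (hS hq)
    exact ih h1 h2

/-- The end cell of a move is occupied afterwards. -/
lemma move_end_mem {board dirs : Finset Cell} {B B' : Pos} {p q : Cell}
    (h : Move board dirs B B' p q) : q ∈ B' := by
  induction h with
  | @single B B' p d hj => rw [hj.2.2.2.2.2]; exact Finset.mem_insert_self _ _
  | cons hj hm ih => exact ih

/-- In a nonempty move sequence ending at a single peg, every fully occupied
nonempty Merson region contains the start of some move. -/
lemma ms_exists_start {board dirs : Finset Cell} {B F : Pos} {l : List (Cell × Cell)}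
    (h : MoveSeq board dirs B F l) :
    ∀ {t : Cell} {S : Finset Cell}, F = {t} → MersonRegion board dirs S → S.Nonempty →
      S ⊆ B → l ≠ [] → ∃ pq ∈ l, pq.1 ∈ S := by
  induction h with
  | nil B => intro t S _ _ _ _ hl; exact absurd rfl hl
  | @cons B B' B'' p q l' hmv hs ih =>
    intro t S hF hMer hne hS _
    by_cases hp : p ∈ S
    · exact ⟨(p, q), List.mem_cons_self, hp⟩
    · obtain ⟨hSB', hq⟩ := move_preserve hmv hMer hS hp
      cases l' with
      | nil =>
        cases hs
        subst hF
        have hqt : q = t := Finset.mem_singleton.1 (move_end_mem hmv)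
        obtain ⟨s, hsS⟩ := hne
        have : s = t := Finset.mem_singleton.1 (hSB' hsS)
        exact absurd (hqt ▸ (this ▸ hsS)) hq
      | cons a l'' =>
        obtain ⟨pq, h1, h2⟩ := ih hF hMer hne hSB' (List.cons_ne_nil a l'')
        exact ⟨pq, List.mem_cons_of_mem _ h1, h2⟩

/-- on Diamond(5) under 8-move solitaire, for any family of pairwise disjoint
nonempty Merson regions, the heuristic h₃(B) = number of regions completely filled by `B`
(overridden to 0 when `B` has exactly one peg) is an admissible lower bound on the number
of moves needed to reach any single-peg position from `B`. -/
theorem stmt_18 (regions : Finset (Finset Cell))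
    (hM : ∀ R ∈ regions, MersonRegion diamond5 dirs8 R)
    (hne : ∀ R ∈ regions, R.Nonempty)
    (hdisj : ∀ R ∈ regions, ∀ S ∈ regions, R ≠ S → Disjoint R S)
    (B : Pos) (hB : B ⊆ diamond5) (t : Cell) (ht : t ∈ diamond5)
    (l : List (Cell × Cell)) (h : MoveSeq diamond5 dirs8 B {t} l) :
    (if B.card = 1 then 0 else (regions.filter (fun R => R ⊆ B)).card) ≤ l.length := by
  by_cases hc : B.card = 1
  · simp [hc]
  · simp only [hc, if_false]
    have hl : l ≠ [] := by
      intro hnil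
      subst hnil
      cases h
      simp at hc
    have key : ∀ R : Finset Cell, ∃ pq : Cell × Cell,
        R ∈ regions.filter (fun R => R ⊆ B) → pq ∈ l.toFinset ∧ pq.1 ∈ R := by
      intro R
      by_cases hR : R ∈ regions.filter (fun R => R ⊆ B)
      · obtain ⟨hR1, hR2⟩ := Finset.mem_filter.1 hR
        obtain ⟨pq, h1, h2⟩ :=
          ms_exists_start h rfl (hM R hR1) (hne R hR1) hR2 hl
        exact ⟨pq, fun _ => ⟨List.mem_toFinset.2 h1, h2⟩⟩
      · exact ⟨((0, 0), (0, 0)), fun hmem => absurd hmem hR⟩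
    choose f hf using key
    calc (regions.filter (fun R => R ⊆ B)).card ≤ l.toFinset.card := by
          apply Finset.card_le_card_of_injOn f (fun R hR => (hf R hR).1)
          intro R hR S hS hfeq
          by_contra hRS
          have hR1 := (Finset.mem_filter.1 hR).1
          have hS1 := (Finset.mem_filter.1 hS).1
          have hd := hdisj R hR1 S hS1 hRS
          exact (Finset.disjoint_left.1 hd) (hf R hR).2 (hfeq ▸ (hf S hS).2)
      _ ≤ l.length := l.toFinset_card_le
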